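/- Let f(t) be defined by f(t) = √((3-|t|)/(1+|t|)) for 1 < |t| < 3, f(t) = √((3-t)/(1+t)) + √((3+t)/(1-t)) for |t| < 1, and f(t) = 0 otherwise. Then (1/(4π)) ∫_{-3}^{3} f(t) dt = 1, i.e. f/(4π) is a probability density; moreover its odd moments vanish and its even moments satisfy (1/(4π)) ∫_{-3}^{3} t^m f(t) dt = ∑_{i=0}^{m} (-1)^i binomial(m,i) (2i)!/(i!(i+1)!) for m even. -/

import Mathlib

open Real Finset

/-- The "Batman" density from the Sato–Tate distribution for the K3 surfaces. -/
noncomputable def batman (t : ℝ) : ℝ :=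
  if 1 < |t| ∧ |t| < 3 then Real.sqrt ((3 - |t|) / (1 + |t|))
  else if |t| < 1 then Real.sqrt ((3 - t) / (1 + t)) + Real.sqrt ((3 + t) / (1 - t))
  else 0

section BatmanAux

open intervalIntegral MeasureTheory Set

noncomputable def batAux (t : ℝ) : ℝ := Real.sqrt ((3 - t) / (1 + t))

lemma prod_ratio (n : ℕ) : ∏ k ∈ range n, ((2*(k:ℝ)+1)/(2*k+2))
    = (Nat.factorial (2*n) : ℝ) / (4^n * (Nat.factorial n)^2) := by
  induction n with
  | zero => simp
  | succ n ih =>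
    rw [prod_range_succ, ih]
    have h1 : ((2*(n+1)).factorial : ℝ) = (2*n+2)*((2*n+1)*(2*n).factorial) := by
      have : 2*(n+1) = (2*n+1)+1 := by ring
      rw [this, Nat.factorial_succ]
      push_cast [Nat.factorial_succ]
      ring
    have h2 : ((n+1).factorial : ℝ) = (n+1) * n.factorial := by
      push_cast [Nat.factorial_succ]; ring
    rw [h1, h2]
    have hf : (Nat.factorial n : ℝ) ≠ 0 := Nat.cast_ne_zero.mpr n.factorial_ne_zero
    have h4 : (4:ℝ)^n ≠ 0 := by positivity
    field_simp
    ring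

lemma sin_sq_cos_sq_half (i : ℕ) :
    ∫ v in (0:ℝ)..(π/2), sin v ^ (2*i) * cos v ^ 2
      = (1/2) * ∫ u in (0:ℝ)..π, sin u ^ (2*i) * cos u ^ 2 := by
  have hc : ∀ a b : ℝ, IntervalIntegrable (fun u : ℝ => sin u ^ (2*i) * cos u ^ 2) volume a b :=
    fun a b => (Continuous.intervalIntegrable (by fun_prop) a b)
  have hsplit : (∫ u in (0:ℝ)..π, sin u ^ (2*i) * cos u ^ 2)
      = (∫ u in (0:ℝ)..(π/2), sin u ^ (2*i) * cos u ^ 2)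
        + ∫ u in (π/2:ℝ)..π, sin u ^ (2*i) * cos u ^ 2 :=
    (integral_add_adjacent_intervals (hc 0 (π/2)) (hc (π/2) π)).symm
  have hrefl : (∫ u in (π/2:ℝ)..π, sin u ^ (2*i) * cos u ^ 2)
      = ∫ u in (0:ℝ)..(π/2), sin u ^ (2*i) * cos u ^ 2 := by
    have := integral_comp_sub_left (a := (0:ℝ)) (b := π/2)
      (fun u : ℝ => sin u ^ (2*i) * cos u ^ 2) π
    rw [show π - π/2 = π/2 by ring, show π - (0:ℝ) = π by ring] at this
    rw [← this]
    have : ∀ u : ℝ, sin (π - u) ^ (2*i) * cos (π - u) ^ 2 = sin u ^ (2*i) * cos u ^ 2 := by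
      intro u; rw [Real.sin_pi_sub, Real.cos_pi_sub]; ring
    simp only [this]
  rw [hsplit, hrefl]; ring

lemma W_eq (i : ℕ) : ∫ v in (0:ℝ)..(π/2), sin v ^ (2*i) * cos v ^ 2
    = π / 4^(i+1) * ((Nat.factorial (2*i) : ℝ) / (Nat.factorial i * Nat.factorial (i+1))) := by
  rw [sin_sq_cos_sq_half]
  have h1 : (∫ u in (0:ℝ)..π, sin u ^ (2*i) * cos u ^ 2)
      = (∫ u in (0:ℝ)..π, sin u ^ (2*i)) - ∫ u in (0:ℝ)..π, sin u ^ (2*(i+1)) := by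
    rw [← integral_sub (Continuous.intervalIntegrable (by fun_prop) _ _)
      (Continuous.intervalIntegrable (by fun_prop) _ _)]
    apply integral_congr
    intro u _
    simp only []
    have := sin_sq_add_cos_sq u
    have h : cos u ^ 2 = 1 - sin u ^ 2 := by linarith
    rw [h]
    ring
  rw [h1, integral_sin_pow_even, integral_sin_pow_even, prod_range_succ, prod_ratio]
  have hf : (Nat.factorial i : ℝ) ≠ 0 := Nat.cast_ne_zero.mpr i.factorial_ne_zero
  have h2 : ((i+1).factorial : ℝ) = (i+1) * i.factorial := by
    push_cast [Nat.factorial_succ]; ring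
  have h4 : (4:ℝ)^i ≠ 0 := by positivity
  rw [h2]
  field_simp
  ring

lemma batAux_nonneg (t : ℝ) : 0 ≤ batAux t := Real.sqrt_nonneg _

lemma intervalIntegrable_batAux (m : ℕ) :
    IntervalIntegrable (fun t => t ^ m * batAux t) volume (-1) 3 := by
  have hrpow : IntervalIntegrable (fun t : ℝ => (t + 1) ^ (-(1/2) : ℝ)) volume (-1) 3 := by
    have := (intervalIntegrable_rpow' (a := 0) (b := 4) (r := -(1/2)) (by norm_num)).comp_add_right 1
    norm_num at this
    exact this
  have hbig := hrpow.const_mul ((3:ℝ)^m * 2)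
  refine hbig.mono_fun ?_ ?_
  · apply Measurable.aestronglyMeasurable
    unfold batAux
    fun_prop
  · have hsub : Set.uIoc (-1 : ℝ) 3 = Set.Ioc (-1 : ℝ) 3 := Set.uIoc_of_le (by norm_num)
    rw [hsub]
    apply (ae_restrict_iff' measurableSet_Ioc).mpr
    filter_upwards with t ht
    obtain ⟨ht1, ht3⟩ := ht
    have h1t : (0:ℝ) < 1 + t := by linarith
    have hst : (0:ℝ) < Real.sqrt (1 + t) := Real.sqrt_pos.mpr h1t
    have h3t : (0:ℝ) ≤ 3 - t := by linarith
    have hg : batAux t = Real.sqrt (3 - t) / Real.sqrt (1 + t) := by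
      unfold batAux
      rw [Real.sqrt_div h3t]
    have hgle : batAux t ≤ 2 / Real.sqrt (1 + t) := by
      rw [hg]
      gcongr
      calc Real.sqrt (3 - t) ≤ Real.sqrt 4 := Real.sqrt_le_sqrt (by linarith)
        _ = 2 := by
          rw [show (4:ℝ) = 2^2 by norm_num, Real.sqrt_sq (by norm_num)]
    have hrw : (t + 1) ^ (-(1/2) : ℝ) = 1 / Real.sqrt (1 + t) := by
      rw [Real.rpow_neg (by linarith), one_div, show (1 + t) = (t + 1) by ring,
        Real.sqrt_eq_rpow]
      norm_num
    simp only [norm_mul, norm_pow, Real.norm_eq_abs]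
    have h1 : |t| ^ m ≤ 3 ^ m := by
      apply pow_le_pow_left₀ (abs_nonneg t)
      rw [abs_le]; constructor <;> linarith
    have h2 : |batAux t| = batAux t := abs_of_nonneg (batAux_nonneg t)
    have h3 : |(3:ℝ)^m * 2| = 3^m * 2 := abs_of_nonneg (by positivity)
    have h4 : |(t + 1) ^ (-(1/2) : ℝ)| = (t + 1) ^ (-(1/2) : ℝ) := by
      apply abs_of_nonneg
      exact Real.rpow_nonneg (by linarith) _
    rw [h2, abs_of_nonneg (by norm_num : (0:ℝ) ≤ 3), abs_of_nonneg (by norm_num : (0:ℝ) ≤ 2), h4, hrw]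
    calc |t| ^ m * batAux t
        ≤ 3 ^ m * (2 / Real.sqrt (1 + t)) := by
          apply mul_le_mul h1 hgle (batAux_nonneg t) (by positivity)
      _ = 3 ^ m * 2 * (1 / Real.sqrt (1 + t)) := by ring

lemma cos_lt_one_of (u : ℝ) (hu0 : 0 < u) (huπ : u ≤ π) : cos u < 1 := by
  have := Real.strictAntiOn_cos (Set.mem_Icc.mpr ⟨le_refl 0, Real.pi_pos.le⟩)
    (Set.mem_Icc.mpr ⟨hu0.le, huπ⟩) hu0
  simpa using this

lemma key_pointwise (m : ℕ) {u : ℝ} (hu0 : 0 < u) (huπ : u ≤ π) :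
    (2 * sin u) * ((1 - 2*cos u) ^ m * batAux (1 - 2*cos u))
      = 2 * (1 + cos u) * (1 - 2*cos u) ^ m := by
  have hmain : sin u * batAux (1 - 2*cos u) = 1 + cos u := by
    have hs : 0 ≤ sin u := Real.sin_nonneg_of_nonneg_of_le_pi hu0.le huπ
    have hcle : cos u < 1 := cos_lt_one_of u hu0 huπ
    have hcge : -1 ≤ cos u := Real.neg_one_le_cos u
    have h2 : (0:ℝ) < 2 - 2*cos u := by linarith
    unfold batAux
    rw [show 3 - (1 - 2*cos u) = 2 + 2*cos u by ring,
        show 1 + (1 - 2*cos u) = 2 - 2*cos u by ring,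
        ← Real.sqrt_sq hs, ← Real.sqrt_mul (sq_nonneg _)]
    have harg : sin u ^ 2 * ((2 + 2*cos u)/(2 - 2*cos u)) = (1 + cos u)^2 := by
      have hsin : sin u ^ 2 = 1 - cos u ^ 2 := by
        have := sin_sq_add_cos_sq u; linarith
      rw [hsin]
      rw [mul_div_assoc', div_eq_iff h2.ne']
      ring
    rw [harg, Real.sqrt_sq (by linarith : (0:ℝ) ≤ 1 + cos u)]
  calc (2 * sin u) * ((1 - 2*cos u) ^ m * batAux (1 - 2*cos u))
      = 2 * (sin u * batAux (1 - 2*cos u)) * (1 - 2*cos u) ^ m := by ring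
    _ = 2 * (1 + cos u) * (1 - 2*cos u) ^ m := by rw [hmain]

lemma batAux_subst (m : ℕ) :
    (∫ t in (-1:ℝ)..3, t ^ m * batAux t)
      = ∫ u in (0:ℝ)..π, 2 * (1 + cos u) * (1 - 2*cos u) ^ m := by
  have hπ := Real.pi_pos
  set f : ℝ → ℝ := fun u => 1 - 2*cos u with hfdef
  set G : ℝ → ℝ := fun t => t ^ m * batAux t with hGdef
  have himIcc : ∀ u : ℝ, f u ∈ Icc (-1:ℝ) 3 := by
    intro u
    have h1 := Real.neg_one_le_cos u
    have h2 := Real.cos_le_one u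
    constructor <;> simp only [hfdef] <;> linarith
  have hderiv : ∀ u : ℝ, HasDerivAt f (2 * sin u) u := by
    intro u
    have := ((Real.hasDerivAt_cos u).const_mul (2:ℝ)).const_sub (1:ℝ)
    simpa [mul_comm] using this
  have hsub := integral_comp_smul_deriv''' (a := 0) (b := π) (f := f)
    (f' := fun u => 2 * sin u) (g := G)
    (by fun_prop)
    (fun x hx => (hderiv x).hasDerivWithinAt)
    ?_ ?_ ?_
  · rw [show f 0 = -1 by norm_num [hfdef], show f π = 3 by norm_num [hfdef]] at hsub
    rw [← hsub]
    apply intervalIntegral.integral_congr_ae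
    apply Filter.Eventually.of_forall
    intro u hu
    rw [Set.uIoc_of_le hπ.le] at hu
    simp only [smul_eq_mul, Function.comp_apply, hGdef, hfdef]
    exact key_pointwise m hu.1 hu.2
  · -- continuity of G on image of Ioo
    have hss : f '' (Set.Ioo (min 0 π) (max 0 π)) ⊆ Set.Ioo (-1:ℝ) 3 := by
      rintro t ⟨u, hu, rfl⟩
      rw [min_eq_left hπ.le, max_eq_right hπ.le] at hu
      have h1 : cos u < 1 := cos_lt_one_of u hu.1 hu.2.le
      have h2 : -1 < cos u := by
        have := Real.strictAntiOn_cos (Set.mem_Icc.mpr ⟨hu.1.le, hu.2.le⟩)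
          (Set.mem_Icc.mpr ⟨hπ.le, le_refl π⟩) hu.2
        simpa using this
      constructor <;> simp only [hfdef] <;> linarith
    apply ContinuousOn.mono ?_ hss
    apply ContinuousOn.mul (by fun_prop)
    apply ContinuousOn.sqrt
    apply ContinuousOn.div (by fun_prop) (by fun_prop)
    intro t ht
    have := ht.1
    intro h
    simp only [Set.mem_Ioo] at ht
    nlinarith [ht.1]
  · -- integrability of G on image of uIcc
    have h1 : IntegrableOn G (Set.Icc (-1:ℝ) 3) volume := by
      have := intervalIntegrable_batAux m
      rwa [intervalIntegrable_iff_integrableOn_Icc_of_le (by norm_num)] at this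
    apply h1.mono_set
    rintro t ⟨u, _, rfl⟩
    exact himIcc u
  · -- integrability of the substituted integrand
    have hcont : Continuous (fun u : ℝ => 2 * (1 + cos u) * (1 - 2*cos u) ^ m) := by fun_prop
    have h0 : IntegrableOn (fun u : ℝ => 2 * (1 + cos u) * (1 - 2*cos u) ^ m)
        (Set.uIcc 0 π) volume := hcont.integrableOn_uIcc
    have hne : ∀ᵐ u : ℝ ∂(volume.restrict (Set.uIcc 0 π)), u ≠ (0:ℝ) := by
      refine ae_iff.mpr ?_
      have hs : {u : ℝ | ¬ u ≠ 0} = {(0:ℝ)} := by ext x; simp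
      rw [hs]
      exact le_zero_iff.mp ((Measure.restrict_apply_le _ _).trans_eq (measure_singleton 0))
    apply MeasureTheory.Integrable.congr h0
    filter_upwards [hne, ae_restrict_mem measurableSet_uIcc] with u hu hmem
    rw [Set.uIcc_of_le hπ.le] at hmem
    have hpos : 0 < u := lt_of_le_of_ne hmem.1 (Ne.symm hu)
    simp only [smul_eq_mul, Function.comp_apply, hGdef, hfdef]
    exact (key_pointwise m hpos hmem.2).symm

lemma A_eval (m : ℕ) (hm : Even m) :
    (∫ t in (-1:ℝ)..3, t ^ m * batAux t)
      = 2 * π * ∑ i ∈ range (m + 1),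
          (-1 : ℝ) ^ i * (m.choose i) *
            (Nat.factorial (2 * i) : ℝ) / (Nat.factorial i * Nat.factorial (i + 1)) := by
  rw [batAux_subst m]
  have hhalf : (∫ u in (0:ℝ)..π, 2 * (1 + cos u) * (1 - 2*cos u) ^ m)
      = 2 * ∫ v in (0:ℝ)..(π/2), 2 * (1 + cos (2*v)) * (1 - 2*cos (2*v)) ^ m := by
    have := integral_comp_mul_left (a := (0:ℝ)) (b := π/2)
      (fun u : ℝ => 2 * (1 + cos u) * (1 - 2*cos u) ^ m) (c := 2) (by norm_num)
    rw [show (2:ℝ) * (π/2) = π by ring, show (2:ℝ) * 0 = 0 by ring] at this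
    rw [this, smul_eq_mul]
    ring
  rw [hhalf]
  have hpw : ∀ v : ℝ, 2 * (1 + cos (2*v)) * (1 - 2*cos (2*v)) ^ m
      = ∑ i ∈ range (m+1),
          ((-1:ℝ)^i * 4^i * (m.choose i)) * (4 * (sin v ^ (2*i) * cos v ^ 2)) := by
    intro v
    have hc2 : cos (2*v) = 1 - 2 * sin v ^ 2 := by
      rw [Real.cos_two_mul]
      have := sin_sq_add_cos_sq v
      linarith
    rw [hc2]
    have h1 : (1:ℝ) + (1 - 2 * sin v ^ 2) = 2 * (1 - sin v ^ 2) := by ring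
    have hcos : (1:ℝ) - sin v ^ 2 = cos v ^ 2 := by
      have := sin_sq_add_cos_sq v; linarith
    have h2 : (1:ℝ) - 2*(1 - 2 * sin v ^ 2) = 4 * sin v ^ 2 - 1 := by ring
    rw [h1, hcos, h2]
    have h3 : (4 * sin v ^ 2 - 1) ^ m = (1 - 4 * sin v ^ 2) ^ m := by
      rw [show (4 * sin v ^ 2 - 1 : ℝ) = -(1 - 4 * sin v ^ 2) by ring, hm.neg_pow]
    rw [h3, show (1 - 4 * sin v ^ 2 : ℝ) = -(4 * sin v ^2) + 1 by ring, add_pow]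
    rw [Finset.mul_sum, Finset.sum_congr rfl]
    intro i _
    rw [show (-(4 * sin v ^ 2) : ℝ) ^ i = (-1)^i * 4^i * (sin v ^ 2) ^ i by rw [neg_pow]; ring,
      ← pow_mul]
    ring
  rw [intervalIntegral.integral_congr (g :=
    fun v => ∑ i ∈ range (m+1),
      ((-1:ℝ)^i * 4^i * (m.choose i)) * (4 * (sin v ^ (2*i) * cos v ^ 2)))
    (fun v _ => hpw v)]
  rw [intervalIntegral.integral_finset_sum
    (fun i _ => Continuous.intervalIntegrable (by fun_prop) _ _)]
  rw [Finset.mul_sum, Finset.mul_sum, Finset.sum_congr rfl]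
  intro i _
  rw [intervalIntegral.integral_const_mul, intervalIntegral.integral_const_mul, W_eq i]
  have h4 : (4:ℝ)^i ≠ 0 := by positivity
  have h41 : (4:ℝ)^(i+1) ≠ 0 := by positivity
  field_simp
  ring

lemma ae_ne_restrict (c : ℝ) (s : Set ℝ) : ∀ᵐ t ∂((volume : Measure ℝ).restrict s), t ≠ c := by
  refine ae_iff.mpr (le_zero_iff.mp ?_)
  have hs : {t : ℝ | ¬ t ≠ c} = {c} := by ext x; simp
  rw [hs]
  exact (Measure.restrict_apply_le _ _).trans_eq (measure_singleton c)

lemma ae_ne (c : ℝ) : ∀ᵐ t : ℝ, t ≠ c := by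
  refine ae_iff.mpr ?_
  have hs : {t : ℝ | ¬ t ≠ c} = {c} := by ext x; simp
  rw [hs]
  exact measure_singleton c

lemma intervalIntegrable_batAux_neg (m : ℕ) :
    IntervalIntegrable (fun t => t ^ m * batAux (-t)) volume (-3) 1 := by
  have h := ((IntervalIntegrable.iff_comp_neg enorm_ne_top).mp (intervalIntegrable_batAux m)).symm
  have h2 := h.const_mul ((-1:ℝ)^m)
  have hfun : (fun x => ((-1:ℝ))^m * ((-x)^m * batAux (-x)))
      = fun x => x^m * batAux (-x) := by
    funext x
    rw [← mul_assoc, ← mul_pow]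
    norm_num
  rw [hfun] at h2
  simpa using h2

-- pointwise identities on the open pieces
lemma batman_eq_left {t : ℝ} (h3 : -3 < t) (h1 : t < -1) : batman t = batAux (-t) := by
  have habs : |t| = -t := abs_of_neg (by linarith)
  unfold batman batAux
  rw [habs, if_pos (by constructor <;> linarith)]

lemma batman_eq_mid {t : ℝ} (h1 : -1 < t) (h2 : t < 1) : batman t = batAux t + batAux (-t) := by
  have habs : |t| < 1 := abs_lt.mpr ⟨h1, h2⟩
  unfold batman batAux
  rw [if_neg (by push_neg; intro h; linarith), if_pos habs]
  norm_num [show (3:ℝ) - -t = 3 + t by ring, show (1:ℝ) + -t = 1 - t by ring]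

lemma batman_eq_right {t : ℝ} (h1 : 1 < t) (h2 : t < 3) : batman t = batAux t := by
  have habs : |t| = t := abs_of_pos (by linarith)
  unfold batman batAux
  rw [habs, if_pos ⟨h1, h2⟩]

lemma split_eq (m : ℕ) :
    (∫ t in (-3:ℝ)..3, t ^ m * batman t)
      = ((-1:ℝ)^m + 1) * ∫ t in (-1:ℝ)..3, t ^ m * batAux t := by
  have hInt := intervalIntegrable_batAux m
  have hIntNeg := intervalIntegrable_batAux_neg m
  -- the three congruence statements
  have hc1 : (∫ t in (-3:ℝ)..(-1), t ^ m * batman t)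
      = ∫ t in (-3:ℝ)..(-1), t ^ m * batAux (-t) := by
    apply intervalIntegral.integral_congr_ae
    filter_upwards [ae_ne (-1)] with t ht hmem
    rw [Set.uIoc_of_le (by norm_num : (-3:ℝ) ≤ -1)] at hmem
    have : t < -1 := lt_of_le_of_ne hmem.2 ht
    rw [batman_eq_left hmem.1 this]
  have hc2 : (∫ t in (-1:ℝ)..1, t ^ m * batman t)
      = ∫ t in (-1:ℝ)..1, (t ^ m * batAux t + t ^ m * batAux (-t)) := by
    apply intervalIntegral.integral_congr_ae
    filter_upwards [ae_ne 1] with t ht hmem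
    rw [Set.uIoc_of_le (by norm_num : (-1:ℝ) ≤ 1)] at hmem
    have : t < 1 := lt_of_le_of_ne hmem.2 ht
    rw [batman_eq_mid hmem.1 this]
    ring
  have hc3 : (∫ t in (1:ℝ)..3, t ^ m * batman t)
      = ∫ t in (1:ℝ)..3, t ^ m * batAux t := by
    apply intervalIntegral.integral_congr_ae
    filter_upwards [ae_ne 3] with t ht hmem
    rw [Set.uIoc_of_le (by norm_num : (1:ℝ) ≤ 3)] at hmem
    have : t < 3 := lt_of_le_of_ne hmem.2 ht
    rw [batman_eq_right hmem.1 this]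
  -- integrability of the pieces
  have hI1 : IntervalIntegrable (fun t => t ^ m * batman t) volume (-3) (-1) := by
    apply (hIntNeg.mono_set' ?_).congr_ae ?_
    · rw [Set.uIoc_of_le (by norm_num : (-3:ℝ) ≤ -1), Set.uIoc_of_le (by norm_num : (-3:ℝ) ≤ 1)]
      exact Set.Ioc_subset_Ioc le_rfl (by norm_num)
    · filter_upwards [ae_ne_restrict (-1) _, ae_restrict_mem measurableSet_uIoc]
        with t ht hmem
      rw [Set.uIoc_of_le (by norm_num : (-3:ℝ) ≤ -1)] at hmem
      exact (batman_eq_left hmem.1 (lt_of_le_of_ne hmem.2 ht)).symm ▸ rfl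
  have hIA : IntervalIntegrable (fun t => t ^ m * batAux t) volume (-1) 1 := by
    apply hInt.mono_set'
    rw [Set.uIoc_of_le (by norm_num : (-1:ℝ) ≤ 1), Set.uIoc_of_le (by norm_num : (-1:ℝ) ≤ 3)]
    exact Set.Ioc_subset_Ioc le_rfl (by norm_num)
  have hIB : IntervalIntegrable (fun t => t ^ m * batAux (-t)) volume (-1) 1 := by
    apply hIntNeg.mono_set'
    rw [Set.uIoc_of_le (by norm_num : (-1:ℝ) ≤ 1), Set.uIoc_of_le (by norm_num : (-3:ℝ) ≤ 1)]
    exact Set.Ioc_subset_Ioc (by norm_num) le_rfl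
  have hI2 : IntervalIntegrable (fun t => t ^ m * batman t) volume (-1) 1 := by
    apply ((hIA.add hIB).congr_ae ?_)
    filter_upwards [ae_ne_restrict 1 _, ae_restrict_mem measurableSet_uIoc]
      with t ht hmem
    rw [Set.uIoc_of_le (by norm_num : (-1:ℝ) ≤ 1)] at hmem
    show t ^ m * batAux t + t ^ m * batAux (-t) = t ^ m * batman t
    rw [batman_eq_mid hmem.1 (lt_of_le_of_ne hmem.2 ht)]
    ring
  have hI3 : IntervalIntegrable (fun t => t ^ m * batman t) volume 1 3 := by
    apply ((hInt.mono_set' ?_).congr_ae ?_)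
    · rw [Set.uIoc_of_le (by norm_num : (1:ℝ) ≤ 3), Set.uIoc_of_le (by norm_num : (-1:ℝ) ≤ 3)]
      exact Set.Ioc_subset_Ioc (by norm_num) le_rfl
    · filter_upwards [ae_ne_restrict 3 _, ae_restrict_mem measurableSet_uIoc]
        with t ht hmem
      rw [Set.uIoc_of_le (by norm_num : (1:ℝ) ≤ 3)] at hmem
      exact (batman_eq_right hmem.1 (lt_of_le_of_ne hmem.2 ht)).symm ▸ rfl
  -- split the integral
  have hsplit : (∫ t in (-3:ℝ)..3, t ^ m * batman t)
      = (∫ t in (-3:ℝ)..(-1), t ^ m * batman t) + (∫ t in (-1:ℝ)..1, t ^ m * batman t)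
        + ∫ t in (1:ℝ)..3, t ^ m * batman t := by
    rw [integral_add_adjacent_intervals hI1 hI2,
      integral_add_adjacent_intervals (hI1.trans hI2) hI3]
  rw [hsplit, hc1, hc2, hc3]
  rw [intervalIntegral.integral_add hIA hIB]
  have hgroupB : (∫ t in (-3:ℝ)..(-1), t ^ m * batAux (-t))
      + (∫ t in (-1:ℝ)..1, t ^ m * batAux (-t)) = ∫ t in (-3:ℝ)..1, t ^ m * batAux (-t) := by
    apply integral_add_adjacent_intervals
    · apply hIntNeg.mono_set'
      rw [Set.uIoc_of_le (by norm_num : (-3:ℝ) ≤ -1), Set.uIoc_of_le (by norm_num : (-3:ℝ) ≤ 1)]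
      exact Set.Ioc_subset_Ioc le_rfl (by norm_num)
    · exact hIB
  have hgroupA : (∫ t in (-1:ℝ)..1, t ^ m * batAux t)
      + (∫ t in (1:ℝ)..3, t ^ m * batAux t) = ∫ t in (-1:ℝ)..3, t ^ m * batAux t := by
    apply integral_add_adjacent_intervals hIA
    apply hInt.mono_set'
    rw [Set.uIoc_of_le (by norm_num : (1:ℝ) ≤ 3), Set.uIoc_of_le (by norm_num : (-1:ℝ) ≤ 3)]
    exact Set.Ioc_subset_Ioc (by norm_num) le_rfl
  have hneg : (∫ t in (-3:ℝ)..1, t ^ m * batAux (-t))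
      = (-1:ℝ)^m * ∫ t in (-1:ℝ)..3, t ^ m * batAux t := by
    have hpw : ∀ t : ℝ, t ^ m * batAux (-t) = (-1:ℝ)^m * ((-t) ^ m * batAux (-t)) := by
      intro t
      rw [← mul_assoc, ← mul_pow]
      norm_num
    rw [intervalIntegral.integral_congr (g := fun t => (-1:ℝ)^m * ((-t) ^ m * batAux (-t)))
      (fun t _ => hpw t)]
    rw [intervalIntegral.integral_const_mul]
    congr 1
    have := intervalIntegral.integral_comp_neg (a := (-3:ℝ)) (b := 1)
      (fun s => s ^ m * batAux s)
    simpa using this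
  calc (∫ t in (-3:ℝ)..(-1), t ^ m * batAux (-t))
        + ((∫ t in (-1:ℝ)..1, t ^ m * batAux t) + ∫ t in (-1:ℝ)..1, t ^ m * batAux (-t))
        + ∫ t in (1:ℝ)..3, t ^ m * batAux t
      = ((∫ t in (-3:ℝ)..(-1), t ^ m * batAux (-t)) + ∫ t in (-1:ℝ)..1, t ^ m * batAux (-t))
        + ((∫ t in (-1:ℝ)..1, t ^ m * batAux t) + ∫ t in (1:ℝ)..3, t ^ m * batAux t) := by ring
    _ = (-1:ℝ)^m * (∫ t in (-1:ℝ)..3, t ^ m * batAux t)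
        + ∫ t in (-1:ℝ)..3, t ^ m * batAux t := by rw [hgroupB, hgroupA, hneg]
    _ = ((-1:ℝ)^m + 1) * ∫ t in (-1:ℝ)..3, t ^ m * batAux t := by ring

end BatmanAux

theorem batman_moments :
    ((1 / (4 * π)) * ∫ t in (-3 : ℝ)..3, batman t) = 1 ∧
    (∀ m : ℕ, Odd m → (1 / (4 * π)) * ∫ t in (-3 : ℝ)..3, t ^ m * batman t = 0) ∧
    (∀ m : ℕ, Even m →
      (1 / (4 * π)) * ∫ t in (-3 : ℝ)..3, t ^ m * batman t =
        ∑ i ∈ range (m + 1),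
          (-1 : ℝ) ^ i * (m.choose i) *
            (Nat.factorial (2 * i) : ℝ) / (Nat.factorial i * Nat.factorial (i + 1))) := by
  have hπ : (π : ℝ) ≠ 0 := Real.pi_ne_zero
  have hkey : ∀ m : ℕ, Even m →
      (1 / (4 * π)) * ∫ t in (-3 : ℝ)..3, t ^ m * batman t =
        ∑ i ∈ range (m + 1),
          (-1 : ℝ) ^ i * (m.choose i) *
            (Nat.factorial (2 * i) : ℝ) / (Nat.factorial i * Nat.factorial (i + 1)) := by
    intro m hm
    rw [split_eq m, A_eval m hm, hm.neg_one_pow]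
    field_simp
    ring
  refine ⟨?_, ?_, hkey⟩
  · have h0 := hkey 0 Even.zero
    have heq : (∫ t in (-3:ℝ)..3, batman t) = ∫ t in (-3:ℝ)..3, t ^ 0 * batman t := by
      apply intervalIntegral.integral_congr
      intro t _
      simp
    rw [heq, h0]
    norm_num [Nat.factorial]
  · intro m hm
    rw [split_eq m, hm.neg_one_pow]
    norm_num
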